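/- Let H be a real antisymmetric d×d matrix (Hᵀ = −H) and let |H| = (−H²)^{1/2} denote the positive semidefinite square root of −H² = HᵀH. Then for all u, v ∈ ℝ^d, |uᵀHv| ≤ (uᵀ|H|u)^{1/2} (vᵀ|H|v)^{1/2}. -/

import Mathlib

open Matrix Finset

lemma key_sum_ineq (n : ℕ) (W : Matrix (Fin n) (Fin n) ℝ) (dg : Fin n → ℝ)
    (hd : ∀ i, 0 ≤ dg i)
    (hcol : ∀ j, ∑ i, W i j ^ 2 = dg j ^ 2)
    (hrow : ∀ i k, ∑ j, W i j * W k j = if i = k then dg i ^ 2 else 0)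
    (hcomm : ∀ i j, W i j ≠ 0 → dg i = dg j)
    (x y : Fin n → ℝ) :
    |∑ j, (∑ i, W i j * x i) * y j| ≤
      Real.sqrt (∑ i, dg i * x i ^ 2) * Real.sqrt (∑ i, dg i * y i ^ 2) := by
  classical
  set z : Fin n → ℝ := fun j => ∑ i, W i j * x i with hz
  have hz0 : ∀ j, dg j = 0 → z j = 0 := by
    intro j hj
    have hc := hcol j
    rw [hj] at hc
    have hWz : ∀ i, W i j = 0 := by
      intro i
      have h0 : ∑ i, W i j ^ 2 = 0 := by simpa using hc
      have := (Finset.sum_eq_zero_iff_of_nonneg (fun i _ => sq_nonneg (W i j))).mp h0 i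
        (Finset.mem_univ i)
      exact (pow_eq_zero_iff two_ne_zero).mp this
    simp [hz, hWz]
  set c : Fin n → ℝ := fun j => if dg j = 0 then 0 else (dg j)⁻¹ with hc
  set a : Fin n → ℝ := fun j => if dg j = 0 then 0 else z j / Real.sqrt (dg j) with ha
  set b : Fin n → ℝ := fun j => Real.sqrt (dg j) * y j with hb
  have hdpos : ∀ j, dg j ≠ 0 → 0 < dg j := fun j h => lt_of_le_of_ne (hd j) (Ne.symm h)
  have hab : ∀ j, z j * y j = a j * b j := by
    intro j
    by_cases h : dg j = 0
    · simp [ha, hb, h, hz0 j h]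
    · have hs : Real.sqrt (dg j) ≠ 0 := by
        simpa [Real.sqrt_ne_zero'] using hdpos j h
      simp only [ha, hb, if_neg h]
      field_simp
  have ha2 : ∀ j, a j ^ 2 = c j * z j ^ 2 := by
    intro j
    by_cases h : dg j = 0
    · simp [ha, hc, h]
    · simp only [ha, hc, if_neg h, div_pow, Real.sq_sqrt (hd j)]
      rw [inv_mul_eq_div]
  have hb2 : ∀ j, b j ^ 2 = dg j * y j ^ 2 := by
    intro j
    simp only [hb, mul_pow, Real.sq_sqrt (hd j)]
  -- the crucial estimate on ∑ a j ^ 2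
  have haz : ∑ j, a j ^ 2 ≤ ∑ i, dg i * x i ^ 2 := by
    have inner_eq : ∀ i k : Fin n,
        (∑ j, c j * (W i j * W k j)) = c i * (if i = k then dg i ^ 2 else 0) := by
      intro i k
      rw [← hrow i k, Finset.mul_sum]
      refine Finset.sum_congr rfl fun j _ => ?_
      by_cases hW : W i j = 0
      · simp [hW]
      · have : dg i = dg j := hcomm i j hW
        simp only [hc, this]
    calc ∑ j, a j ^ 2
        = ∑ j, ∑ i, ∑ k, (x i * x k) * (c j * (W i j * W k j)) := by
          refine Finset.sum_congr rfl fun j _ => ?_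
          rw [ha2 j, hz, sq, Finset.sum_mul_sum, Finset.mul_sum]
          refine Finset.sum_congr rfl fun i _ => ?_
          rw [Finset.mul_sum]
          refine Finset.sum_congr rfl fun k _ => ?_
          ring
      _ = ∑ i, ∑ k, (x i * x k) * (∑ j, c j * (W i j * W k j)) := by
          rw [Finset.sum_comm]
          refine Finset.sum_congr rfl fun i _ => ?_
          rw [Finset.sum_comm]
          refine Finset.sum_congr rfl fun k _ => ?_
          rw [Finset.mul_sum]
      _ = ∑ i, x i ^ 2 * (c i * dg i ^ 2) := by
          refine Finset.sum_congr rfl fun i _ => ?_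
          rw [Finset.sum_eq_single i]
          · rw [inner_eq i i, if_pos rfl]; ring
          · intro k _ hk
            rw [inner_eq i k, if_neg (Ne.symm hk)]
            ring
          · intro h; exact absurd (Finset.mem_univ i) h
      _ ≤ ∑ i, dg i * x i ^ 2 := by
          refine Finset.sum_le_sum fun i _ => ?_
          by_cases h : dg i = 0
          · simp [hc, h]
          · simp only [hc, if_neg h]
            apply le_of_eq
            field_simp
  have hB : ∑ j, b j ^ 2 = ∑ j, dg j * y j ^ 2 := Finset.sum_congr rfl fun j _ => hb2 j
  have hbound : Real.sqrt (∑ j, a j ^ 2) * Real.sqrt (∑ j, b j ^ 2) ≤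
      Real.sqrt (∑ i, dg i * x i ^ 2) * Real.sqrt (∑ i, dg i * y i ^ 2) := by
    apply mul_le_mul (Real.sqrt_le_sqrt haz) (le_of_eq (by rw [hB])) (Real.sqrt_nonneg _)
      (Real.sqrt_nonneg _)
  have h1 : ∑ j, z j * y j ≤ Real.sqrt (∑ j, a j ^ 2) * Real.sqrt (∑ j, b j ^ 2) := by
    calc ∑ j, z j * y j = ∑ j, a j * b j := Finset.sum_congr rfl fun j _ => hab j
      _ ≤ _ := Real.sum_mul_le_sqrt_mul_sqrt Finset.univ a b
  have h2 : -(∑ j, z j * y j) ≤ Real.sqrt (∑ j, a j ^ 2) * Real.sqrt (∑ j, b j ^ 2) := by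
    calc -(∑ j, z j * y j) = ∑ j, (-a j) * b j := by
          rw [← Finset.sum_neg_distrib]
          exact Finset.sum_congr rfl fun j _ => by rw [hab j]; ring
      _ ≤ Real.sqrt (∑ j, (-a j) ^ 2) * Real.sqrt (∑ j, b j ^ 2) :=
          Real.sum_mul_le_sqrt_mul_sqrt Finset.univ _ b
      _ = _ := by simp
  exact abs_le.mpr ⟨by linarith [le_trans h2 hbound], le_trans h1 hbound⟩

open Matrix Finset

/-- Let `H` be a real antisymmetric `d×d` matrix (`Hᵀ = −H`) and let
`|H| = (−H²)^{1/2}` denote the positive semidefinite square root of `−H² = Hᵀ H`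
(here given as any positive semidefinite matrix `K` with `K² = −H²`; such a `K` is
unique).  Then for all `u, v ∈ ℝ^d`, `|uᵀ H v| ≤ (uᵀ |H| u)^{1/2} (vᵀ |H| v)^{1/2}`. -/
theorem abs_skew_pairing_le
    (d : ℕ) (H K : Matrix (Fin d) (Fin d) ℝ)
    (hH : Hᵀ = -H) (hK : K.PosSemidef) (hK2 : K * K = -(H * H))
    (u v : Fin d → ℝ) :
    |u ⬝ᵥ H.mulVec v| ≤
      Real.sqrt (u ⬝ᵥ K.mulVec u) * Real.sqrt (v ⬝ᵥ K.mulVec v) := by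
  classical
  have hHerm : K.IsHermitian := hK.1
  set dg : Fin d → ℝ := hHerm.eigenvalues with hdg
  have hd : ∀ i, 0 ≤ dg i := fun i => hK.eigenvalues_nonneg i
  set Q : Matrix (Fin d) (Fin d) ℝ := (hHerm.eigenvectorUnitary : Matrix (Fin d) (Fin d) ℝ)
    with hQdef
  have hQt : star Q = Qᵀ := by
    rw [Matrix.star_eq_conjTranspose, conjTranspose_eq_transpose_of_trivial]
  have hQ1 : Qᵀ * Q = 1 := by
    rw [← hQt]; exact (Matrix.mem_unitaryGroup_iff').mp hHerm.eigenvectorUnitary.2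
  have hQ2 : Q * Qᵀ = 1 := by
    rw [← hQt]; exact (Matrix.mem_unitaryGroup_iff).mp hHerm.eigenvectorUnitary.2
  have hDiag : Qᵀ * K * Q = diagonal dg := by
    have : star Q * K * Q = diagonal dg :=
      (Unitary.conjStarAlgAut_star_apply (S := ℝ) _ _).symm.trans hHerm.conjStarAlgAut_star_eigenvectorUnitary
    rw [hQt] at this
    convert this using 2
  set W : Matrix (Fin d) (Fin d) ℝ := Qᵀ * H * Q with hW
  have hHtH : Hᵀ * H = K * K := by rw [hH, hK2, neg_mul]
  have hHHt : H * Hᵀ = K * K := by rw [hH, hK2, mul_neg]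
  have hWt : Wᵀ = Qᵀ * Hᵀ * Q := by
    rw [hW, transpose_mul, transpose_mul, transpose_transpose, mul_assoc]
  have hKKd : Qᵀ * (K * K) * Q = diagonal (fun i => dg i ^ 2) := by
    have : Qᵀ * (K * K) * Q = (Qᵀ * K * Q) * (Qᵀ * K * Q) := by
      rw [mul_assoc (Qᵀ * K) Q, ← mul_assoc Q, ← mul_assoc Q, hQ2, one_mul]
      simp only [mul_assoc]
    rw [this, hDiag, diagonal_mul_diagonal]
    exact congrArg _ (funext fun i => (sq (dg i)).symm)
  have hWtW : Wᵀ * W = diagonal (fun i => dg i ^ 2) := by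
    rw [hWt, hW, ← hKKd, ← hHtH]
    rw [mul_assoc (Qᵀ * Hᵀ) Q, ← mul_assoc Q, ← mul_assoc Q, hQ2, one_mul]
    simp only [mul_assoc]
  have hWWt : W * Wᵀ = diagonal (fun i => dg i ^ 2) := by
    rw [hWt, hW, ← hKKd, ← hHHt]
    rw [mul_assoc (Qᵀ * H) Q, ← mul_assoc Q, ← mul_assoc Q, hQ2, one_mul]
    simp only [mul_assoc]
  -- entrywise facts
  have hcol : ∀ j, ∑ i, W i j ^ 2 = dg j ^ 2 := by
    intro j
    have := congrFun (congrFun hWtW j) j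
    rw [mul_apply, diagonal_apply_eq] at this
    simpa [transpose_apply, sq] using this
  have hrow : ∀ i k, ∑ j, W i j * W k j = if i = k then dg i ^ 2 else 0 := by
    intro i k
    have := congrFun (congrFun hWWt i) k
    rw [mul_apply, diagonal_apply] at this
    simpa [transpose_apply] using this
  have hcomm : ∀ i j, W i j ≠ 0 → dg i = dg j := by
    intro i j hWij
    have hmul := (mul_assoc W Wᵀ W).symm
    rw [hWtW, hWWt] at hmul
    have := congrFun (congrFun hmul i) j
    rw [mul_diagonal, diagonal_mul] at this
    have hsq : dg i ^ 2 = dg j ^ 2 := by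
      have h2 : dg i ^ 2 * W i j = dg j ^ 2 * W i j := by rw [← this]; ring
      exact mul_right_cancel₀ hWij h2
    rw [← Real.sqrt_sq (hd i), ← Real.sqrt_sq (hd j), hsq]
  -- transported vectors
  set x : Fin d → ℝ := Qᵀ *ᵥ u with hx
  set y : Fin d → ℝ := Qᵀ *ᵥ v with hy
  have conj_dot : ∀ (M : Matrix (Fin d) (Fin d) ℝ) (p q : Fin d → ℝ),
      (Qᵀ *ᵥ p) ⬝ᵥ ((Qᵀ * M * Q) *ᵥ (Qᵀ *ᵥ q)) = p ⬝ᵥ (M *ᵥ q) := by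
    intro M p q
    rw [← mulVec_mulVec, ← mulVec_mulVec, mulVec_mulVec q Q Qᵀ, hQ2, one_mulVec,
      dotProduct_mulVec, mulVec_transpose, vecMul_vecMul, ← mulVec_transpose, transpose_mul,
      transpose_transpose, hQ2, one_mulVec]
  have hHv : u ⬝ᵥ H.mulVec v = ∑ j, (∑ i, W i j * x i) * y j := by
    rw [← conj_dot H u v, ← hW]
    rw [dotProduct_mulVec, ← mulVec_transpose]
    simp only [dotProduct, mulVec, dotProduct, transpose_apply, hx, hy]
  have hKdot : ∀ p : Fin d → ℝ, p ⬝ᵥ K.mulVec p = ∑ i, dg i * (Qᵀ *ᵥ p) i ^ 2 := by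
    intro p
    rw [← conj_dot K p p, hDiag, dotProduct_mulVec]
    simp only [dotProduct, vecMul_diagonal]
    exact Finset.sum_congr rfl fun i _ => by ring
  rw [hHv, hKdot u, hKdot v, ← hx, ← hy]
  exact key_sum_ineq d W dg hd hcol hrow hcomm x y
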